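/- Let (γ_j)_{j≥1} be a positive sequence, α ∈ (0,1), B > 0, and let (q_t)_{t≥1} be a real sequence with q_1 ∈ [0,B] defined recursively by q_{t+1} = q_t + γ_{J(t)}·(r_t − α)·S_t, where S_t ∈ {0,1} is arbitrary, J(t) = 1 + Σ_{i<t} S_i, and the 'reaction' r_t ∈ [0,1] satisfies: r_t = 1 whenever q_t < 0, and whenever q_t > B either S_t = 0 or r_t = 0. Then for all t ≥ 1, q_t ∈ [−α·max_{1≤j≤J(t)} γ_j, B + (1−α)·max_{1≤j≤J(t)} γ_j]. -/
import Mathlib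


open Finset

/-- Number of selections before time `t` (plus one): `J(t) = 1 + ∑_{i<t} S_i`,
with time starting at `1`. -/
def Jsel (S : ℕ → ℕ) (t : ℕ) : ℕ := 1 + ∑ i ∈ Finset.Ico 1 t, S i

/-- `max_{1 ≤ j ≤ J} γ_j` (equal to `γ 1` if `J = 0`, but we always use it with `J ≥ 1`). -/
noncomputable def maxStep (γ : ℕ → ℝ) (J : ℕ) : ℝ :=
  (insert 1 (Finset.Icc 1 J)).sup' (Finset.insert_nonempty _ _) γ

lemma maxStep_pos' (γ : ℕ → ℝ) (hγpos : ∀ j, 0 < γ j) (J : ℕ) : 0 < maxStep γ J :=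
  lt_of_lt_of_le (hγpos 1) (Finset.le_sup' γ (Finset.mem_insert_self _ _))

lemma maxStep_mono' (γ : ℕ → ℝ) {J J' : ℕ} (h : J ≤ J') : maxStep γ J ≤ maxStep γ J' := by
  apply Finset.sup'_le
  intro j hj
  apply Finset.le_sup' γ
  simp only [Finset.mem_insert, Finset.mem_Icc] at hj ⊢
  rcases hj with h1 | ⟨h1, h2⟩
  · exact Or.inl h1
  · exact Or.inr ⟨h1, h2.trans h⟩

lemma le_maxStep' (γ : ℕ → ℝ) {J J' : ℕ} (h1 : 1 ≤ J) (h2 : J ≤ J') : γ J ≤ maxStep γ J' :=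
  Finset.le_sup' γ (by simp [Finset.mem_insert, Finset.mem_Icc]; omega)

lemma Jsel_succ (S : ℕ → ℕ) {t : ℕ} (ht : 1 ≤ t) : Jsel S (t+1) = Jsel S t + S t := by
  unfold Jsel
  rw [Finset.sum_Ico_succ_top ht]
  ring

/-- Lemma 1 (boundedness of the OnlineSCI threshold sequence): for any positive step
sequence `γ`, any `α ∈ (0,1)`, `B > 0`, any selection indicators `S_t ∈ {0,1}`, any
reactions `r_t ∈ [0,1]` satisfying `r_t = 1` when `q_t < 0` and (`S_t = 0` or `r_t = 0`)
when `q_t > B`, the recursion `q_{t+1} = q_t + γ_{J(t)} (r_t - α) S_t` started at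
`q_1 ∈ [0,B]` stays in `[-α max_{1≤j≤J(t)} γ_j, B + (1-α) max_{1≤j≤J(t)} γ_j]`. -/
theorem stmt_0
    (γ : ℕ → ℝ) (hγpos : ∀ j, 0 < γ j)
    (α B : ℝ) (hα : α ∈ Set.Ioo (0:ℝ) 1) (hB : 0 < B)
    (S : ℕ → ℕ) (hS : ∀ t, S t = 0 ∨ S t = 1)
    (r : ℕ → ℝ) (hr : ∀ t, 1 ≤ t → r t ∈ Set.Icc (0:ℝ) 1)
    (q : ℕ → ℝ) (hq1 : q 1 ∈ Set.Icc (0:ℝ) B)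
    (hrec : ∀ t, 1 ≤ t → q (t + 1) = q t + γ (Jsel S t) * (r t - α) * (S t : ℝ))
    (hrneg : ∀ t, 1 ≤ t → q t < 0 → r t = 1)
    (hrbig : ∀ t, 1 ≤ t → q t > B → (S t = 0 ∨ r t = 0)) :
    ∀ t, 1 ≤ t →
      q t ∈ Set.Icc (-α * maxStep γ (Jsel S t)) (B + (1 - α) * maxStep γ (Jsel S t)) := by
  obtain ⟨hα0, hα1⟩ := hα
  intro t ht
  induction t with
  | zero => omega
  | succ n ih =>
    rcases Nat.eq_or_lt_of_le ht with h1 | h1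
    · -- base case n + 1 = 1
      have hn : n = 0 := by omega
      subst hn
      have hM := maxStep_pos' γ hγpos (Jsel S 1)
      constructor
      · nlinarith [hq1.1]
      · nlinarith [hq1.2]
    · have hn : 1 ≤ n := by omega
      have ihn := ih hn
      set J := Jsel S n with hJ
      have hJ1 : 1 ≤ J := by rw [hJ]; unfold Jsel; omega
      have hJle : J ≤ Jsel S (n+1) := by rw [Jsel_succ S hn]; omega
      have hMM : maxStep γ J ≤ maxStep γ (Jsel S (n+1)) := maxStep_mono' γ hJle
      have hγM : γ J ≤ maxStep γ (Jsel S (n+1)) := le_maxStep' γ hJ1 hJle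
      have hM'pos := maxStep_pos' γ hγpos (Jsel S (n+1))
      have hMpos := maxStep_pos' γ hγpos J
      have hrn := hr n hn
      have hrec' := hrec n hn
      rcases hS n with hS0 | hS1
      · -- no selection
        rw [hrec', hS0]
        push_cast
        constructor
        · nlinarith [ihn.1]
        · nlinarith [ihn.2]
      · rw [hrec', hS1]
        push_cast
        have hγJ := hγpos J
        constructor
        · -- lower bound
          rcases lt_or_ge (q n) 0 with hneg | hpos
          · have hr1 := hrneg n hn hneg
            rw [hr1]
            nlinarith [ihn.1]
          · nlinarith [hrn.1]
        · -- upper bound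
          rcases lt_or_ge B (q n) with hbig | hle
          · rcases hrbig n hn hbig with h0 | h0
            · omega
            · rw [h0]
              nlinarith [ihn.2]
          · nlinarith [hrn.2]
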